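/- arXiv:1312.0551 — 2 statements merged into one kernel-verified Lean document; each statement's English description precedes it below -/
import Mathlib

section
/- For every n > 0, the map sending a sequence (h_1,…,h_k) with 1 ≤ k ≤ n, h_i ≥ i for all i ∈ [k], h_1 ≤ h_2 ≤ … ≤ h_{k−1} ≤ 2n − k, and h_k ∈ {2n − k, 2n − k + 1} to the word u^{h_1} r u^{h_2 − h_1} r ⋯ r u^{h_k − h_{k−1}} if h_k = 2n − k + 1, and to the word u^{h_1} r u^{h_2 − h_1} r ⋯ r u^{h_k − h_{k−1}} r if h_k = 2n − k (with h_0 := 0), is a bijection from the set of such sequences onto the set of Dyck words of type B of semilength n. -/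
/-- A Dyck word of type B of semilength `n`: a word of length `2n` over `{u, r}`
(`true` = `u`, `false` = `r`) every prefix of which contains at least as many
`u`'s as `r`'s. -/
def IsDyckWordB (n : ℕ) (w : List Bool) : Prop :=
  w.length = 2 * n ∧ ∀ ℓ : ℕ, (w.take ℓ).count false ≤ (w.take ℓ).count true

/-- Height sequences of type B (written 0-indexed): lists `(h_1, …, h_k)` with
`1 ≤ k ≤ n`, `h_i ≥ i` for `i ∈ [k]`, `h_1 ≤ h_2 ≤ … ≤ h_{k-1} ≤ 2n - k`, and
`h_k ∈ {2n - k, 2n - k + 1}`. -/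
def IsHeightSeqB (n : ℕ) (h : List ℕ) : Prop :=
  1 ≤ h.length ∧ h.length ≤ n ∧
    (∀ i < h.length, i + 1 ≤ h.getD i 0) ∧
    (∀ i : ℕ, i + 2 < h.length → h.getD i 0 ≤ h.getD (i + 1) 0) ∧
    (2 ≤ h.length → h.getD (h.length - 2) 0 ≤ 2 * n - h.length) ∧
    (h.getD (h.length - 1) 0 = 2 * n - h.length ∨
      h.getD (h.length - 1) 0 = 2 * n - h.length + 1)

/-- `seqWord prev (a₁ :: … :: aₖ)` is the word
`u^{a₁ - prev} r u^{a₂ - a₁} r ⋯ r u^{aₖ - a_{k-1}} r` (with a trailing `r`). -/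
def seqWord : ℕ → List ℕ → List Bool
  | _, [] => []
  | prev, a :: rest => List.replicate (a - prev) true ++ false :: seqWord a rest

/-- The word associated to a sequence `(h_1, …, h_k)`: it is
`u^{h_1} r u^{h_2 - h_1} r ⋯ r u^{h_k - h_{k-1}}` if `h_k = 2n - k + 1`
(no trailing `r`), and `u^{h_1} r u^{h_2 - h_1} r ⋯ r u^{h_k - h_{k-1}} r`
if `h_k = 2n - k`. -/
def toWordB (n : ℕ) (h : List ℕ) : List Bool :=
  if h.getD (h.length - 1) 0 = 2 * n - h.length + 1 then (seqWord 0 h).dropLast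
  else seqWord 0 h

/-- the counter-trace of the falses -/
def heights : ℕ → List Bool → List ℕ
  | _, [] => []
  | c, true :: w => heights (c+1) w
  | c, false :: w => c :: heights c w

lemma length_heights (c : ℕ) (w : List Bool) : (heights c w).length = w.count false := by
  induction w generalizing c with
  | nil => simp [heights]
  | cons b w ih => cases b <;> simp [heights, ih, List.count_cons]

lemma chain_cons' {R : ℕ → ℕ → Prop} {a b : ℕ} {l : List ℕ} :
    List.Chain R a (b :: l) ↔ R a b ∧ List.Chain R b l := List.isChain_cons_cons

lemma chain_iff_get' {R : ℕ → ℕ → Prop} {a : ℕ} {l : List ℕ} : List.Chain R a l ↔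
    (∀ h : 0 < l.length, R a l[0]) ∧ ∀ i (h : i < l.length - 1), R l[i] l[i+1] := by
  show List.IsChain R (a :: l) ↔ _
  rw [List.isChain_iff_getElem]
  constructor
  · intro H; exact ⟨fun h => H 0 (by simp; omega), fun i h => H (i+1) (by simp; omega)⟩
  · rintro ⟨H1, H2⟩ i hi
    cases i with
    | zero => exact H1 (by simp at hi; omega)
    | succ i => exact H2 i (by simp at hi; omega)

lemma chain_iff_pairwise' {a : ℕ} {l : List ℕ} :
    List.Chain (· ≤ ·) a l ↔ List.Pairwise (· ≤ ·) (a :: l) := List.isChain_iff_pairwise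

lemma chain_le_of_le {c d : ℕ} {l : List ℕ} (h : c ≤ d) (hc : List.Chain (· ≤ ·) d l) :
    List.Chain (· ≤ ·) c l := by
  cases l with
  | nil => exact List.Chain.nil
  | cons a t => rw [chain_cons'] at hc ⊢; exact ⟨le_trans h hc.1, hc.2⟩

lemma heights_chain (c : ℕ) (w : List Bool) : List.Chain (· ≤ ·) c (heights c w) := by
  induction w generalizing c with
  | nil => exact List.Chain.nil
  | cons b w ih =>
    cases b with
    | false => exact List.chain_cons.2 ⟨le_refl c, ih c⟩
    | true => exact chain_le_of_le (Nat.le_succ c) (ih (c+1))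

lemma seqWord_cons_true {c a : ℕ} (hca : c < a) (rest : List ℕ) :
    seqWord c (a :: rest) = true :: seqWord (c+1) (a :: rest) := by
  show List.replicate (a - c) true ++ false :: seqWord a rest
    = true :: (List.replicate (a - (c+1)) true ++ false :: seqWord a rest)
  have : a - c = (a - (c+1)) + 1 := by omega
  rw [this, List.replicate_succ, List.cons_append]

/-- (B) -/
lemma seqWord_heights (w : List Bool) : ∀ c, w.getLast? = some false →
    seqWord c (heights c w) = w := by
  induction w with
  | nil => intro c h; simp at h
  | cons b w ih =>
    intro c hl
    cases b with
    | false =>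
      show seqWord c (c :: heights c w) = _
      show List.replicate (c - c) true ++ false :: seqWord c (heights c w) = _
      rw [Nat.sub_self]
      cases w with
      | nil => rfl
      | cons b' w' =>
        rw [List.getLast?_cons_cons] at hl
        simp [ih c hl]
    | true =>
      have hw : w ≠ [] := by rintro rfl; simp at hl
      have hl' : w.getLast? = some false := by
        have : true :: w = [true] ++ w := rfl
        rwa [this, List.getLast?_append_of_ne_nil _ hw] at hl
      show seqWord c (heights (c+1) w) = _
      have hmem : false ∈ w := by
        obtain ⟨h1, h2⟩ := List.mem_getLast?_eq_getLast hl'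
        rw [h2]; exact List.getLast_mem h1
      have hne : heights (c+1) w ≠ [] := by
        intro hnil
        have h1 := length_heights (c+1) w
        rw [hnil] at h1
        have := List.count_pos_iff.2 hmem
        simp at h1; omega
      obtain ⟨a, rest, hrw⟩ := List.exists_cons_of_ne_nil hne
      have ha : c + 1 ≤ a := by
        have := heights_chain (c+1) w
        rw [hrw, chain_cons'] at this
        exact this.1
      rw [hrw, seqWord_cons_true (by omega), ← hrw, ih (c+1) hl']
lemma count_false_seqWord (h : List ℕ) : ∀ prev, (seqWord prev h).count false = h.length := by
  induction h with
  | nil => intro prev; rfl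
  | cons a rest ih =>
    intro prev
    show (List.replicate (a - prev) true ++ false :: seqWord a rest).count false = _
    simp [List.count_append, List.count_replicate, List.count_cons, ih]

lemma chain_le_getLastD {a : ℕ} {l : List ℕ} (h : List.Chain (· ≤ ·) a l) :
    a ≤ l.getLastD a := by
  induction l generalizing a with
  | nil => simp
  | cons b t ih =>
    rw [chain_cons'] at h
    calc a ≤ b := h.1
    _ ≤ t.getLastD b := ih h.2
    _ = (b :: t).getLastD a := (List.getLastD_cons).symm

lemma count_true_seqWord (h : List ℕ) : ∀ prev, List.Chain (· ≤ ·) prev h →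
    (seqWord prev h).count true = h.getLastD prev - prev := by
  induction h with
  | nil => intro prev _; simp [seqWord]
  | cons a rest ih =>
    intro prev hc
    rw [chain_cons'] at hc
    show (List.replicate (a - prev) true ++ false :: seqWord a rest).count true = _
    simp only [List.count_append, List.count_replicate, List.count_cons]
    rw [ih a hc.2]
    have h1 := chain_le_getLastD hc.2
    have h2 : (a :: rest).getLastD prev = rest.getLastD a := List.getLastD_cons
    rw [h2]
    have h3 := hc.1
    generalize rest.getLastD a = x at h1 ⊢
    norm_num
    omega

lemma length_bool (l : List Bool) : l.length = l.count true + l.count false := by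
  induction l with
  | nil => rfl
  | cons b t ih =>
    cases b with
    | true =>
      rw [List.length_cons, ih, List.count_cons_self, List.count_cons_of_ne (by decide)]
      omega
    | false =>
      rw [List.length_cons, ih, List.count_cons_self, List.count_cons_of_ne (by decide)]
      omega

lemma seqWord_getLast? (a : ℕ) (rest : List ℕ) : ∀ prev,
    (seqWord prev (a :: rest)).getLast? = some false := by
  induction rest generalizing a with
  | nil =>
    intro prev
    show (List.replicate (a - prev) true ++ [false]).getLast? = some false
    exact List.getLast?_concat
  | cons b t ih =>
    intro prev
    show (List.replicate (a - prev) true ++ false :: seqWord a (b :: t)).getLast? = some false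
    rw [List.getLast?_append_of_ne_nil _ (by simp)]
    have hne : seqWord a (b :: t) ≠ [] := by
      show List.replicate (b - a) true ++ false :: seqWord b t ≠ []
      simp
    have : false :: seqWord a (b :: t) = [false] ++ seqWord a (b :: t) := rfl
    rw [this, List.getLast?_append_of_ne_nil _ hne]
    exact ih b a

lemma seqWord_concat (l : List ℕ) (a : ℕ) : ∀ prev,
    seqWord prev (l ++ [a]) =
      seqWord prev l ++ (List.replicate (a - l.getLastD prev) true ++ [false]) := by
  induction l with
  | nil => intro prev; simp [seqWord]
  | cons b t ih =>
    intro prev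
    show List.replicate (b - prev) true ++ false :: seqWord b (t ++ [a]) = _
    rw [ih b]
    show _ = List.replicate (b - prev) true ++ false :: seqWord b t ++ _
    have : (b :: t).getLastD prev = t.getLastD b := List.getLastD_cons
    rw [this]
    simp
lemma seqWord_dyck (h : List ℕ) : ∀ prev c, c ≤ prev → List.Chain (· ≤ ·) prev h →
    (∀ i < h.length, c + i + 1 ≤ h.getD i 0) →
    ∀ ℓ, c + ((seqWord prev h).take ℓ).count false ≤
      prev + ((seqWord prev h).take ℓ).count true := by
  induction h with
  | nil => intro prev c hcp _ _ ℓ; show c + (List.take ℓ []).count false ≤ _; simp; omega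
  | cons a rest ih =>
    intro prev c hcp hch hge ℓ
    rw [chain_cons'] at hch
    have ha : c + 1 ≤ a := by
      have := hge 0 (by simp)
      simpa using this
    have hw : seqWord prev (a :: rest)
        = List.replicate (a - prev) true ++ false :: seqWord a rest := rfl
    rw [hw, List.take_append, List.count_append, List.count_append,
        List.take_replicate, List.count_replicate, List.count_replicate]
    norm_num
    rcases Nat.lt_or_ge ℓ (a - prev + 1) with hl | hl
    · have h0 : ℓ - (a - prev) = 0 := by omega
      rw [h0, List.take_zero]
      simp
      omega
    · have h0 : ℓ - (a - prev) = (ℓ - (a - prev) - 1) + 1 := by omega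
      rw [h0, List.take_succ_cons, List.count_cons_self, List.count_cons_of_ne (by decide)]
      have hmin : min ℓ (a - prev) = a - prev := by omega
      rw [hmin]
      set m' := ℓ - (a - prev) - 1
      have hIH := ih a (c+1) ha hch.2 (fun i hi => by
        have := hge (i+1) (by simpa using Nat.succ_lt_succ hi)
        rw [List.getD_cons_succ] at this
        omega) m'
      have := hch.1
      omega

lemma chain_of_getD {h : List ℕ} (H : ∀ i, i + 1 < h.length → h.getD i 0 ≤ h.getD (i+1) 0) :
    List.Chain (· ≤ ·) 0 h := by
  rw [chain_iff_get']
  refine ⟨fun _ => Nat.zero_le _, fun i hi => ?_⟩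
  have h2 : i + 1 < h.length := by omega
  have := H i h2
  rwa [List.getD_eq_getElem _ _ (by omega), List.getD_eq_getElem _ _ h2] at this
lemma getD_concat_length (l : List ℕ) (x : ℕ) : (l ++ [x]).getD l.length 0 = x := by
  rw [List.getD_eq_getElem _ _ (by simp)]
  exact List.getElem_concat_length rfl _

lemma getD_append_left {l : List ℕ} (l' : List ℕ) {i : ℕ} (hi : i < l.length) :
    (l ++ l').getD i 0 = l.getD i 0 := by
  rw [List.getD_eq_getElem _ _ (by simp; omega), List.getD_eq_getElem _ _ hi]
  exact List.getElem_append_left _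

lemma getD_mem {l : List ℕ} {i : ℕ} (hi : i < l.length) : l.getD i 0 ∈ l := by
  rw [List.getD_eq_getElem _ _ hi]
  exact List.getElem_mem _

lemma chain_getD_mono {l : List ℕ} (hc : List.Chain (· ≤ ·) 0 l) :
    ∀ i, i + 1 < l.length → l.getD i 0 ≤ l.getD (i+1) 0 := by
  intro i hi
  rw [chain_iff_get'] at hc
  have := hc.2 i (by omega)
  rwa [List.getD_eq_getElem _ _ (by omega), List.getD_eq_getElem _ _ hi]

lemma getLastD_eq_getD {l : List ℕ} (hne : l ≠ []) (d : ℕ) :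
    l.getLastD d = l.getD (l.length - 1) 0 := by
  rw [List.getLastD_eq_getLast?, List.getLast?_eq_getLast_of_ne_nil hne, Option.getD_some,
    List.getD_eq_getElem _ _ (by simp [Nat.sub_lt (List.length_pos_iff.2 hne)]),
    List.getLast_eq_getElem]

lemma chain_dropLast {l : List ℕ} (hc : List.Chain (· ≤ ·) 0 l) :
    List.Chain (· ≤ ·) 0 l.dropLast := by
  rw [chain_iff_pairwise'] at hc ⊢
  exact hc.sublist ((l.dropLast_sublist).cons_cons 0)

lemma heights_replicate_nil (c m : ℕ) : heights c (List.replicate m true) = [] := by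
  have := length_heights c (List.replicate m true)
  rw [List.count_replicate] at this
  simpa using this

lemma heights_witness (w : List Bool) : ∀ c i, i < (heights c w).length →
    ∃ ℓ, (w.take ℓ).count false = i + 1 ∧
      c + (w.take ℓ).count true = (heights c w).getD i 0 := by
  induction w with
  | nil => intro c i hi; simp [heights] at hi
  | cons b w ih =>
    intro c i hi
    cases b with
    | true =>
      obtain ⟨ℓ, h1, h2⟩ := ih (c+1) i hi
      exact ⟨ℓ + 1, by simpa [List.count_cons] using h1,
        by simpa [List.count_cons, heights, Nat.add_assoc, Nat.add_comm 1] using h2⟩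
    | false =>
      cases i with
      | zero => exact ⟨1, by simp, by simp [heights]⟩
      | succ i =>
        simp only [heights, List.length_cons] at hi
        obtain ⟨ℓ, h1, h2⟩ := ih c i (by omega)
        refine ⟨ℓ + 1, ?_, ?_⟩
        · simp [List.count_cons, h1]
        · simpa [List.count_cons, heights] using h2

lemma heights_replicate_true (c m : ℕ) (l : List Bool) :
    heights c (List.replicate m true ++ l) = heights (c + m) l := by
  induction m generalizing c with
  | zero => simp
  | succ m ih =>
    rw [List.replicate_succ, List.cons_append]
    show heights (c+1) _ = _
    rw [ih]; ring_nf

lemma heights_seqWord (h : List ℕ) : ∀ prev, List.Chain (· ≤ ·) prev h →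
    heights prev (seqWord prev h) = h := by
  induction h with
  | nil => intro prev _; rfl
  | cons a rest ih =>
    intro prev hc
    rw [chain_cons'] at hc
    show heights prev (List.replicate (a - prev) true ++ false :: seqWord a rest) = _
    rw [heights_replicate_true, Nat.add_sub_cancel' hc.1]
    show a :: heights a (seqWord a rest) = _
    rw [ih a hc.2]

lemma heights_le (c : ℕ) (w : List Bool) : ∀ x ∈ heights c w, x ≤ c + w.count true := by
  induction w generalizing c with
  | nil => simp [heights]
  | cons b w ih =>
    cases b with
    | false =>
      intro x hx
      simp [heights] at hx
      rcases hx with rfl | hx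
      · omega
      · have := ih c x hx
        simp [List.count_cons]; omega
    | true =>
      intro x hx
      have := ih (c+1) x hx
      simp [List.count_cons]; omega

lemma heights_append (c : ℕ) (w₁ w₂ : List Bool) :
    heights c (w₁ ++ w₂) = heights c w₁ ++ heights (c + w₁.count true) w₂ := by
  induction w₁ generalizing c with
  | nil => simp [heights]
  | cons b w ih =>
    cases b <;> simp [heights, ih, List.count_cons] <;> ring_nf

lemma heights_concat_false (c : ℕ) (w : List Bool) :
    heights c (w ++ [false]) = heights c w ++ [c + w.count true] := by
  rw [heights_append]; rfl

lemma heights_concat_true (c : ℕ) (w : List Bool) :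
    heights c (w ++ [true]) = heights c w := by
  rw [heights_append]; simp [heights]

lemma heightSeq_chain {n : ℕ} {h : List ℕ} (H : IsHeightSeqB n h) :
    List.Chain (· ≤ ·) 0 h := by
  obtain ⟨hk1, hkn, hge, hmono, hpen, hlast⟩ := H
  apply chain_of_getD
  intro i hi
  rcases Nat.lt_or_ge (i+2) h.length with hlt | hge2
  · exact hmono i hlt
  · have hi1 : i + 1 = h.length - 1 := by omega
    have hi2 : i = h.length - 2 := by omega
    have h2 : 2 ≤ h.length := by omega
    have hp := hpen h2
    have hl : 2*n - h.length ≤ h.getD (h.length - 1) 0 := by rcases hlast with hl|hl <;> omega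
    rw [hi1, hi2]
    omega

lemma toWordB_mem {n : ℕ} (hn : 0 < n) {h : List ℕ} (H : IsHeightSeqB n h) :
    IsDyckWordB n (toWordB n h) := by
  have hch := heightSeq_chain H
  obtain ⟨hk1, hkn, hge, hmono, hpen, hlast⟩ := H
  have hne : h ≠ [] := by intro e; rw [e] at hk1; simp at hk1
  have hlastD : h.getLastD 0 = h.getD (h.length - 1) 0 := getLastD_eq_getD hne 0
  have hct : (seqWord 0 h).count true = h.getD (h.length - 1) 0 := by
    rw [count_true_seqWord h 0 hch, Nat.sub_zero, hlastD]
  have hcf := count_false_seqWord h 0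
  have hlen : (seqWord 0 h).length = h.getD (h.length-1) 0 + h.length := by
    rw [length_bool, hct, hcf]
  have hdyck : ∀ ℓ, ((seqWord 0 h).take ℓ).count false ≤ ((seqWord 0 h).take ℓ).count true := by
    intro ℓ
    have := seqWord_dyck h 0 0 (le_refl 0) hch (fun i hi => by simpa using hge i hi) ℓ
    omega
  rw [toWordB]
  split
  case isTrue hc =>
    constructor
    · rw [List.length_dropLast, hlen, hc]
      omega
    · intro ℓ
      rw [List.dropLast_eq_take, List.take_take]
      exact hdyck _
  case isFalse hc =>
    have hc2 : h.getD (h.length - 1) 0 = 2*n - h.length := by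
      rcases hlast with hl | hl
      · exact hl
      · exact absurd hl hc
    refine ⟨?_, hdyck⟩
    rw [hlen, hc2]
    omega

def decode (n : ℕ) (w : List Bool) : List ℕ :=
  if w.getLast? = some false then heights 0 w else heights 0 w ++ [w.count true]

lemma decode_toWordB {n : ℕ} (hn : 0 < n) {h : List ℕ} (H : IsHeightSeqB n h) :
    decode n (toWordB n h) = h := by
  have hch := heightSeq_chain H
  obtain ⟨hk1, hkn, hge, hmono, hpen, hlast⟩ := H
  have hne : h ≠ [] := by intro e; rw [e] at hk1; simp at hk1
  rw [toWordB]
  split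
  case isFalse hc =>
    obtain ⟨a, rest, he⟩ := List.exists_cons_of_ne_nil hne
    rw [decode, if_pos (by rw [he]; exact seqWord_getLast? a rest 0),
      heights_seqWord _ 0 hch]
  case isTrue hc =>
    set a := h.getD (h.length - 1) 0 with ha
    have hmem : a ∈ h.getLast? := by
      rw [List.getLast?_eq_getLast_of_ne_nil hne]
      have h1 := getLastD_eq_getD hne 0
      rw [List.getLastD_eq_getLast?, List.getLast?_eq_getLast_of_ne_nil hne,
        Option.getD_some] at h1
      rw [Option.mem_def, h1, ← ha]
    have hdecomp : h.dropLast ++ [a] = h := List.dropLast_append_getLast? _ hmem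
    have hsw : seqWord 0 h
        = seqWord 0 h.dropLast ++ (List.replicate (a - h.dropLast.getLastD 0) true ++ [false]) := by
      conv_lhs => rw [← hdecomp]
      exact seqWord_concat _ _ 0
    set t := a - h.dropLast.getLastD 0 with ht
    have hdl : (seqWord 0 h).dropLast
        = seqWord 0 h.dropLast ++ List.replicate t true := by
      rw [hsw, ← List.append_assoc, List.dropLast_concat]
    have hgl : h.dropLast.getLastD 0 < a := by
      rcases Nat.lt_or_ge h.length 2 with h2 | h2
      · have hl1 : h.length = 1 := by omega
        have hdn : h.dropLast = [] := by
          have h3 := List.length_dropLast (xs := h)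
          rw [hl1] at h3
          rw [← List.length_eq_zero_iff]
          omega
        rw [hdn]
        have := hge (h.length - 1) (by omega)
        rw [← ha] at this
        show (0:ℕ) < a
        omega
      · have hdne : h.dropLast ≠ [] := by
          intro e
          have := List.length_dropLast (xs := h)
          rw [e] at this
          simp at this
          omega
        have hdlen : h.dropLast.length = h.length - 1 := List.length_dropLast
        have heq : h.dropLast.getLastD 0 = h.getD (h.length - 2) 0 := by
          rw [getLastD_eq_getD hdne 0, hdlen]
          have h4 : h.length - 1 - 1 = h.length - 2 := by omega
          rw [h4]
          have h5 : h.length - 2 < h.dropLast.length := by omega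
          rw [← getD_append_left [a] h5, hdecomp]
        rw [heq]
        have := hpen h2
        omega
    have htpos : 1 ≤ t := by omega
    have hgle : (seqWord 0 h).dropLast.getLast? = some true := by
      rw [hdl]
      have hrep : List.replicate t true = List.replicate (t-1) true ++ [true] := by
        conv_lhs => rw [show t = (t-1)+1 by omega]
        exact List.replicate_succ'
      rw [hrep, ← List.append_assoc]
      exact List.getLast?_concat
    rw [decode, if_neg (by rw [hgle]; simp)]
    have hh : heights 0 (seqWord 0 h).dropLast = h.dropLast := by
      rw [hdl, heights_append]
      rw [heights_replicate_nil, List.append_nil]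
      exact heights_seqWord _ 0 (chain_dropLast hch)
    have hcnt : ((seqWord 0 h).dropLast).count true = a := by
      rw [hdl, List.count_append, List.count_replicate]
      rw [count_true_seqWord _ 0 (chain_dropLast hch), Nat.sub_zero]
      norm_num
      have hconv : h.dropLast.getLastD 0 = h.dropLast.getLast?.getD 0 := by
        rw [List.getLastD_eq_getLast?]
      omega
    rw [hh, hcnt, hdecomp]

lemma decode_spec {n : ℕ} (hn : 0 < n) {w : List Bool} (H : IsDyckWordB n w) :
    IsHeightSeqB n (decode n w) ∧ toWordB n (decode n w) = w := by
  obtain ⟨hlen, hdyck⟩ := H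
  have hwne : w ≠ [] := by intro e; rw [e] at hlen; simp at hlen; omega
  have hlb := length_bool w
  have hjn : w.count false ≤ n := by
    have := hdyck w.length
    rw [List.take_length] at this
    omega
  cases hb : w.getLast? with
  | none => exact absurd (List.getLast?_eq_none_iff.1 hb) hwne
  | some b =>
  have hdecomp : w.dropLast ++ [b] = w :=
    List.dropLast_append_getLast? _ (by rw [hb]; rfl)
  cases b with
  | false =>
    have hdec : decode n w = heights 0 w := by rw [decode, if_pos hb]
    have hkg : (heights 0 w).length = w.count false := length_heights 0 w
    have hcw : w.count false = w.dropLast.count false + 1 := by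
      conv_lhs => rw [← hdecomp]
      rw [List.count_append]
      simp
    have hct : w.count true = w.dropLast.count true := by
      conv_lhs => rw [← hdecomp]
      rw [List.count_append]
      simp
    have hgei : ∀ i < (heights 0 w).length, i + 1 ≤ (heights 0 w).getD i 0 := by
      intro i hi
      obtain ⟨ℓ, h1, h2⟩ := heights_witness w 0 i hi
      have := hdyck ℓ
      omega
    have hmono := chain_getD_mono (heights_chain 0 w)
    have hsplit : heights 0 w = heights 0 w.dropLast ++ [w.dropLast.count true] := by
      conv_lhs => rw [← hdecomp]
      rw [heights_concat_false]
      norm_num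
    have hglen : (heights 0 w.dropLast).length = w.dropLast.count false := length_heights _ _
    have hlastval : (heights 0 w).getD ((heights 0 w).length - 1) 0 = w.dropLast.count true := by
      rw [hsplit]
      have h5 : (heights 0 w.dropLast ++ [w.dropLast.count true]).length - 1
          = (heights 0 w.dropLast).length := by simp
      rw [h5, getD_concat_length]
    have hval : w.dropLast.count true = 2*n - (heights 0 w).length := by omega
    rw [hdec]
    refine ⟨⟨by omega, by omega, hgei, fun i hi => hmono i (by omega), ?_, Or.inl (by omega)⟩, ?_⟩
    · intro h2
      have := hmono ((heights 0 w).length - 2) (by omega)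
      have h6 : (heights 0 w).length - 2 + 1 = (heights 0 w).length - 1 := by omega
      rw [h6] at this
      omega
    · rw [toWordB, if_neg (by omega)]
      exact seqWord_heights w 0 hb
  | true =>
    have hct : w.count true = w.dropLast.count true + 1 := by
      conv_lhs => rw [← hdecomp]
      rw [List.count_append]
      simp
    have hcf : w.count false = w.dropLast.count false := by
      conv_lhs => rw [← hdecomp]
      rw [List.count_append]
      simp
    have hdllen : w.dropLast.length = w.length - 1 := List.length_dropLast
    have hdlb := length_bool w.dropLast
    have hjn' : w.count false < n := by
      have h7 := hdyck (w.length - 1)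
      rw [← List.dropLast_eq_take] at h7
      omega
    have hb' : (w ++ [false]).getLast? = some false := List.getLast?_concat
    have hdyck' : ∀ ℓ, ((w ++ [false]).take ℓ).count false ≤ ((w ++ [false]).take ℓ).count true := by
      intro ℓ
      rw [List.take_append, List.count_append, List.count_append]
      rcases le_or_gt ℓ w.length with hl | hl
      · have h8 : ℓ - w.length = 0 := by omega
        rw [h8, List.take_zero]
        simpa using hdyck ℓ
      · rw [List.take_of_length_le (by omega)]
        have h9 : (List.take (ℓ - w.length) [false]).count false ≤ 1 := by
          calc (List.take (ℓ - w.length) [false]).count false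
              ≤ (List.take (ℓ - w.length) [false]).length := List.count_le_length
            _ ≤ 1 := by rw [List.length_take]; simp
        omega
    have hdec : decode n w = heights 0 (w ++ [false]) := by
      rw [decode, if_neg (by rw [hb]; simp), heights_concat_false]
      norm_num
    have hkg : (heights 0 (w ++ [false])).length = w.count false + 1 := by
      rw [length_heights, List.count_append]
      simp
    have hgei : ∀ i < (heights 0 (w ++ [false])).length,
        i + 1 ≤ (heights 0 (w ++ [false])).getD i 0 := by
      intro i hi
      obtain ⟨ℓ, h1, h2⟩ := heights_witness (w ++ [false]) 0 i hi
      have := hdyck' ℓ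
      omega
    have hmono := chain_getD_mono (heights_chain 0 (w ++ [false]))
    have hsplit : heights 0 (w ++ [false]) = heights 0 w ++ [w.count true] := by
      rw [heights_concat_false]
      norm_num
    have hhw : heights 0 w = heights 0 w.dropLast := by
      conv_lhs => rw [← hdecomp]
      exact heights_concat_true 0 _
    have hglen : (heights 0 w).length = w.count false := length_heights _ _
    have hlastval : (heights 0 (w ++ [false])).getD
        ((heights 0 (w ++ [false])).length - 1) 0 = w.count true := by
      rw [hsplit]
      have h5 : (heights 0 w ++ [w.count true]).length - 1 = (heights 0 w).length := by simp
      rw [h5, getD_concat_length]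
    rw [hdec]
    refine ⟨⟨by omega, by omega, hgei, fun i hi => hmono i (by omega), ?_, Or.inr (by omega)⟩, ?_⟩
    · intro h2
      have h10 : (heights 0 (w ++ [false])).getD ((heights 0 (w ++ [false])).length - 2) 0
          = (heights 0 w).getD ((heights 0 (w ++ [false])).length - 2) 0 := by
        rw [hsplit]
        have hclen : (heights 0 w ++ [w.count true]).length = (heights 0 w).length + 1 := by
          simp
        exact getD_append_left _ (by omega)
      have h11 := heights_le 0 w.dropLast
          ((heights 0 w).getD ((heights 0 (w ++ [false])).length - 2) 0)
          (by rw [hhw] at *; exact getD_mem (by rw [← hhw]; omega))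
      omega
    · rw [toWordB, if_pos (by omega)]
      rw [seqWord_heights _ 0 hb', List.dropLast_concat]

theorem toWordB_bijOn (n : ℕ) (hn : 0 < n) :
    Set.BijOn (toWordB n) {h | IsHeightSeqB n h} {w | IsDyckWordB n w} := by
  refine ⟨fun h hh => toWordB_mem hn hh, fun h1 hh1 h2 hh2 e => ?_, fun w hw => ?_⟩
  · rw [← decode_toWordB hn hh1, ← decode_toWordB hn hh2, e]
  · obtain ⟨H1, H2⟩ := decode_spec hn hw
    exact ⟨decode n w, H1, H2⟩
end

section
/- For every n > 0, the induced subposet of join-irreducible elements of the lattice D_n^A is order-isomorphic to (T_n^A, ≤), and the induced subposet of join-irreducible elements of the lattice D_n^B is order-isomorphic to (T_n^B, ≤). -/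
/-- `D_n^A` realized as height sequences: functions `h : Fin n → ℕ` that are weakly
increasing and satisfy `i ≤ h i ≤ n` (1-indexed). The order is componentwise. -/
def DyckASet (n : ℕ) : Set (Fin n → ℕ) :=
  {h | Monotone h ∧ ∀ i : Fin n, (i : ℕ) + 1 ≤ h i ∧ h i ≤ n}

/-- `p` is the join (least upper bound) of `x` and `y` in `D_n^A`. -/
def IsJoinA (n : ℕ) (x y p : Fin n → ℕ) : Prop :=
  x ≤ p ∧ y ≤ p ∧ ∀ z ∈ DyckASet n, x ≤ z → y ≤ z → p ≤ z

/-- `p` is join-irreducible in `D_n^A`: `p` lies in `D_n^A`, is not the least element,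
and whenever `p` is the join of two elements, it equals one of them. -/
def JoinIrredA (n : ℕ) (p : Fin n → ℕ) : Prop :=
  p ∈ DyckASet n ∧ ¬(∀ q ∈ DyckASet n, p ≤ q) ∧
    ∀ x y, x ∈ DyckASet n → y ∈ DyckASet n → IsJoinA n x y p → p = x ∨ p = y

/-- The dominance order on height sequences of type B. -/
def DomLeB (a b : List ℕ) : Prop :=
  b.length ≤ a.length ∧ ∀ j < b.length, a.getD j 0 ≤ b.getD j 0

/-- `p` is the join (least upper bound) of `x` and `y` in `D_n^B`. -/
def IsJoinB (n : ℕ) (x y p : List ℕ) : Prop :=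
  DomLeB x p ∧ DomLeB y p ∧
    ∀ z : List ℕ, IsHeightSeqB n z → DomLeB x z → DomLeB y z → DomLeB p z

/-- `p` is join-irreducible in `D_n^B`. -/
def JoinIrredB (n : ℕ) (p : List ℕ) : Prop :=
  IsHeightSeqB n p ∧ ¬(∀ q : List ℕ, IsHeightSeqB n q → DomLeB p q) ∧
    ∀ x y : List ℕ, IsHeightSeqB n x → IsHeightSeqB n y →
      IsJoinB n x y p → p = x ∨ p = y


/- ### Auxiliary material -/

/-- Generic assembly: a surjective-parametrization of a predicate `S` by pairs
satisfying `C`, compatible with the order, yields the required bijection. -/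
lemma assemble {α : Type*} (S : α → Prop) (R : α → α → Prop) (C : ℕ × ℕ → Prop)
    (P : ℕ × ℕ → α)
    (hcl : ∀ a, S a → ∃ q, C q ∧ a = P q)
    (hji : ∀ q, C q → S (P q))
    (hle : ∀ q q', C q → C q' → (R (P q) (P q') ↔ q'.1 ≤ q.1 ∧ q.2 ≤ q'.2)) :
    ∃ f : {a // S a} → {q // C q}, Function.Bijective f ∧
      ∀ a b, R a.1 b.1 ↔ ((f b).1.1 ≤ (f a).1.1 ∧ (f a).1.2 ≤ (f b).1.2) := by
  have hinj : ∀ q q', C q → C q' → P q = P q' → q = q' := by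
    intro q q' hq hq' hpq
    have hrefl : ∀ r, C r → R (P r) (P r) := fun r hr => (hle r r hr hr).mpr ⟨le_refl _, le_refl _⟩
    have r1 : R (P q) (P q') := by rw [hpq]; exact hrefl q' hq'
    have r2 : R (P q') (P q) := by rw [hpq]; exact hrefl q' hq'
    have h1 := (hle q q' hq hq').mp r1
    have h2 := (hle q' q hq' hq).mp r2
    exact Prod.ext (le_antisymm h2.1 h1.1) (le_antisymm h1.2 h2.2)
  choose F hF1 hF2 using hcl
  refine ⟨fun a => ⟨F a.1 a.2, hF1 a.1 a.2⟩, ⟨?_, ?_⟩, ?_⟩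
  · intro a b hab
    apply Subtype.ext
    rw [hF2 a.1 a.2, hF2 b.1 b.2]
    simp only [Subtype.mk.injEq] at hab
    rw [hab]
  · rintro ⟨q, hq⟩
    refine ⟨⟨P q, hji q hq⟩, ?_⟩
    apply Subtype.ext
    exact (hinj _ _ (hF1 _ _) hq (hF2 (P q) (hji q hq)).symm)
  · intro a b
    have ha := hF2 a.1 a.2
    have hb := hF2 b.1 b.2
    rw [ha, hb] at *
    exact hle _ _ (hF1 a.1 a.2) (hF1 b.1 b.2)

/- ### Part A -/

/-- The candidate join-irreducible elements of `D_n^A`. -/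
def pA (n i j : ℕ) : Fin n → ℕ := fun k => if (k : ℕ) + 1 < i then (k : ℕ) + 1 else max j ((k : ℕ) + 1)

/-- Constraints for part A. -/
def CA (n : ℕ) (q : ℕ × ℕ) : Prop := 1 ≤ q.1 ∧ q.1 < q.2 ∧ q.2 ≤ n

lemma pA_mem {n i j : ℕ} (h1 : 1 ≤ i) (h2 : i < j) (h3 : j ≤ n) : pA n i j ∈ DyckASet n := by
  refine ⟨?_, ?_⟩
  · intro a b hab
    have hab' : (a : ℕ) ≤ b := hab
    simp only [pA]
    split_ifs <;> omega
  · intro k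
    have := k.2
    simp only [pA]
    split_ifs <;> omega

lemma minA_mem {n : ℕ} : (fun k : Fin n => (k : ℕ) + 1) ∈ DyckASet n := by
  refine ⟨fun a b hab => by simpa using Nat.add_le_add_right hab 1, fun k => ⟨le_refl _, k.2⟩⟩

lemma pA_le_iff {n i j i' j' : ℕ} (h1 : 1 ≤ i) (h2 : i < j) (h3 : j ≤ n)
    (h1' : 1 ≤ i') (h2' : i' < j') (h3' : j' ≤ n) :
    pA n i j ≤ pA n i' j' ↔ i' ≤ i ∧ j ≤ j' := by
  constructor
  · intro h
    have hi : i - 1 < n := by omega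
    have := h ⟨i - 1, hi⟩
    simp only [pA] at this
    split_ifs at this <;> omega
  · rintro ⟨hii, hjj⟩ k
    simp only [pA]
    split_ifs <;> omega

/-- If `p` is the join of `x` and `y` in `D_n^A`, it is the pointwise max. -/
lemma joinA_eq_max {n : ℕ} {x y p : Fin n → ℕ} (hx : x ∈ DyckASet n) (hy : y ∈ DyckASet n)
    (h : IsJoinA n x y p) : p = fun k => max (x k) (y k) := by
  have hz : (fun k => max (x k) (y k)) ∈ DyckASet n := by
    refine ⟨hx.1.max hy.1, fun k => ⟨le_max_of_le_left (hx.2 k).1,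
      max_le (hx.2 k).2 (hy.2 k).2⟩⟩
  have h1 : p ≤ fun k => max (x k) (y k) :=
    h.2.2 _ hz (fun k => le_max_left _ _) (fun k => le_max_right _ _)
  have h2 : ∀ k, max (x k) (y k) ≤ p k := fun k => max_le (h.1 k) (h.2.1 k)
  exact funext fun k => le_antisymm (h1 k) (h2 k)

lemma pA_eq_of_le {n i j : ℕ} (h1 : 1 ≤ i) (h2 : i < j) (h3 : j ≤ n)
    {x : Fin n → ℕ} (hx : x ∈ DyckASet n) (hxp : x ≤ pA n i j)
    (hi : i - 1 < n) (hval : x ⟨i - 1, hi⟩ = j) : x = pA n i j := by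
  funext k
  refine le_antisymm (hxp k) ?_
  simp only [pA]
  split_ifs with hcase
  · exact (hx.2 k).1
  · have hk : (⟨i - 1, hi⟩ : Fin n) ≤ k := by
      rw [Fin.le_def]
      show i - 1 ≤ (k : ℕ)
      omega
    have h5 := hx.1 hk
    rw [hval] at h5
    have h6 := (hx.2 k).1
    simp only [max_le_iff]
    omega

lemma pA_joinIrred {n i j : ℕ} (h1 : 1 ≤ i) (h2 : i < j) (h3 : j ≤ n) :
    JoinIrredA n (pA n i j) := by
  have hi : i - 1 < n := by omega
  refine ⟨pA_mem h1 h2 h3, ?_, ?_⟩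
  · intro hall
    have := hall _ (minA_mem (n := n)) ⟨i - 1, hi⟩
    simp only [pA] at this
    split_ifs at this <;> omega
  · intro x y hx hy hjoin
    have hmax := joinA_eq_max hx hy hjoin
    have hval : max (x ⟨i - 1, hi⟩) (y ⟨i - 1, hi⟩) = j := by
      have := congrFun hmax ⟨i - 1, hi⟩
      simp only [pA] at this
      split_ifs at this <;> omega
    rcases max_choice (x ⟨i - 1, hi⟩) (y ⟨i - 1, hi⟩) with hc | hc
    · left; exact (pA_eq_of_le h1 h2 h3 hx hjoin.1 hi (by omega)).symm
    · right; exact (pA_eq_of_le h1 h2 h3 hy hjoin.2.1 hi (by omega)).symm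

lemma classA {n : ℕ} {p : Fin n → ℕ} (hp : JoinIrredA n p) :
    ∃ q : ℕ × ℕ, CA n q ∧ p = pA n q.1 q.2 := by
  obtain ⟨hmem, hnb, hji⟩ := hp
  -- there is an index where p exceeds the minimum
  have hex : ∃ k : Fin n, (k : ℕ) + 1 < p k := by
    by_contra hco
    push_neg at hco
    refine hnb fun q hq k => ?_
    exact le_trans (hco k) (hq.2 k).1
  -- least such index
  have hexn : ∃ t : ℕ, ∃ ht : t < n, (t : ℕ) + 1 < p ⟨t, ht⟩ := by
    obtain ⟨k, hk⟩ := hex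
    exact ⟨k.1, k.2, hk⟩
  classical
  set m := Nat.find hexn with hm
  obtain ⟨hmn, hmval⟩ := Nat.find_spec hexn
  have hmin : ∀ t (ht : t < n), t < m → p ⟨t, ht⟩ = t + 1 := by
    intro t ht htm
    have := Nat.find_min hexn htm
    push_neg at this
    have h2 := (hmem.2 ⟨t, ht⟩).1
    have h3 := this ht
    simp only at h2 h3 ⊢
    omega
  set j := p ⟨m, hmn⟩ with hj
  -- propagation: p (m + d) = max j (m + d + 1)
  have hprop : ∀ d (hd : m + d < n), p ⟨m + d, hd⟩ = max j (m + d + 1) := by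
    intro d
    induction d with
    | zero =>
      intro hd
      show p ⟨m, hmn⟩ = max j (m + 0 + 1)
      omega
    | succ d ih =>
      intro hd
      have hd' : m + d < n := by omega
      have ihv := ih hd'
      have hKn : m + d + 1 < n := hd
      show p ⟨m + d + 1, hKn⟩ = max j (m + d + 1 + 1)
      -- monotonicity gives lower bound
      have hmono : p ⟨m + d, hd'⟩ ≤ p ⟨m + d + 1, hKn⟩ := hmem.1 (by rw [Fin.mk_le_mk]; omega)
      have hlb : m + d + 1 + 1 ≤ p ⟨m + d + 1, hKn⟩ := (hmem.2 ⟨m + d + 1, hKn⟩).1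
      have hjm : m + 1 < j := hmval
      -- it suffices to exclude p K > max j (K+1)
      by_contra hne
      have hgt : max j (m + d + 1 + 1) < p ⟨m + d + 1, hKn⟩ := by omega
      -- decompose p as a join of two strictly smaller elements
      obtain ⟨x, hxdef⟩ : ∃ x : Fin n → ℕ,
          x = fun t : Fin n => if (t : ℕ) < m + d + 1 then (t : ℕ) + 1 else p t := ⟨_, rfl⟩
      obtain ⟨y, hydef⟩ : ∃ y : Fin n → ℕ,
          y = fun t : Fin n => if (t : ℕ) < m + d + 1 then p t
            else max (p ⟨m + d, hd'⟩) ((t : ℕ) + 1) := ⟨_, rfl⟩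
      have hxD : x ∈ DyckASet n := by
        constructor
        · intro a b hab
          have hab' : (a : ℕ) ≤ b := hab
          simp only [hxdef]
          split_ifs with ha hb hb
          · omega
          · have := (hmem.2 b).1; omega
          · omega
          · exact hmem.1 hab
        · intro t
          have := (hmem.2 t).1; have := (hmem.2 t).2; have := t.2
          simp only [hxdef]
          split_ifs <;> omega
      have hyD : y ∈ DyckASet n := by
        constructor
        · intro a b hab
          have hab' : (a : ℕ) ≤ b := hab
          simp only [hydef]
          split_ifs with ha hb hb
          · exact hmem.1 hab
          · have : p a ≤ p ⟨m + d, hd'⟩ :=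
              hmem.1 (by rw [Fin.le_def]; show (a : ℕ) ≤ m + d; omega)
            omega
          · omega
          · omega
        · intro t
          have h1 := (hmem.2 t).1; have h2 := (hmem.2 t).2; have := t.2
          have h3 := (hmem.2 ⟨m + d, hd'⟩).2
          simp only [hydef]
          split_ifs <;> omega
      have hxle : x ≤ p := by
        intro t
        simp only [hxdef]
        split_ifs with h
        · exact (hmem.2 t).1
        · exact le_refl _
      have hyle : y ≤ p := by
        intro t
        simp only [hydef]
        split_ifs with h
        · exact le_refl _
        · have h1 : p ⟨m + d, hd'⟩ ≤ p t :=
            hmem.1 (by rw [Fin.le_def]; show m + d ≤ (t : ℕ); omega)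
          have h2 := (hmem.2 t).1
          omega
      have hjoin : IsJoinA n x y p := by
        refine ⟨hxle, hyle, ?_⟩
        intro z hz hxz hyz t
        by_cases h : (t : ℕ) < m + d + 1
        · have := hyz t
          simp only [hydef, if_pos h] at this
          exact this
        · have := hxz t
          simp only [hxdef, if_neg h] at this
          exact this
      rcases hji x y hxD hyD hjoin with hc | hc
      · have := congrFun hc ⟨m, hmn⟩
        simp only [hxdef] at this
        rw [if_pos (by omega)] at this
        omega
      · have := congrFun hc ⟨m + d + 1, hKn⟩
        simp only [hydef] at this
        rw [if_neg (by omega)] at this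
        omega
  refine ⟨(m + 1, j), ⟨by omega, hmval, (hmem.2 ⟨m, hmn⟩).2⟩, ?_⟩
  funext k
  simp only [pA]
  split_ifs with hc
  · exact hmin k.1 k.2 (by omega)
  · have hk : k.1 = m + (k.1 - m) := by omega
    have h2 : m + (k.1 - m) < n := by omega
    have := hprop (k.1 - m) h2
    have hkk : (⟨m + (k.1 - m), h2⟩ : Fin n) = k := by
      apply Fin.ext; simp; omega
    rw [hkk] at this
    rw [this]
    congr 1
    omega

theorem partA (n : ℕ) (hn : 0 < n) :
    ∃ f : {p : Fin n → ℕ // JoinIrredA n p} →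
        {q : ℕ × ℕ // 1 ≤ q.1 ∧ q.1 < q.2 ∧ q.2 ≤ n},
      Function.Bijective f ∧
        ∀ a b, a.1 ≤ b.1 ↔ ((f b).1.1 ≤ (f a).1.1 ∧ (f a).1.2 ≤ (f b).1.2) := by
  exact assemble (JoinIrredA n) (· ≤ ·) (fun q => 1 ≤ q.1 ∧ q.1 < q.2 ∧ q.2 ≤ n)
    (fun q => pA n q.1 q.2)
    (fun a ha => classA ha)
    (fun q hq => pA_joinIrred hq.1 hq.2.1 hq.2.2)
    (fun q q' hq hq' => pA_le_iff hq.1 hq.2.1 hq.2.2 hq'.1 hq'.2.1 hq'.2.2)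
/- ### Part B -/

/-- getD of a list built from a natural-number function. -/
lemma getD_ofFn' {L : ℕ} (g : ℕ → ℕ) {k : ℕ} (hk : k < L) :
    (List.ofFn (fun t : Fin L => g (t : ℕ))).getD k 0 = g k := by
  rw [List.getD_eq_getElem _ _ (by simp [hk])]
  simp

lemma listext {a b : List ℕ} (hl : a.length = b.length)
    (h : ∀ k < a.length, a.getD k 0 = b.getD k 0) : a = b := by
  apply List.ext_getElem hl
  intro k h1 h2
  have := h k h1
  rwa [List.getD_eq_getElem _ _ h1, List.getD_eq_getElem _ _ h2] at this

/-- Entries of a type B height sequence are weakly increasing before the last entry. -/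
lemma monoB {n : ℕ} {x : List ℕ} (hx : IsHeightSeqB n x) {a b : ℕ} (hab : a ≤ b)
    (hb : b + 2 ≤ x.length) : x.getD a 0 ≤ x.getD b 0 := by
  induction b, hab using Nat.le_induction with
  | base => exact le_refl _
  | succ b hab ih => exact le_trans (ih (by omega)) (hx.2.2.2.1 b (by omega))

/-- Interior entries are bounded by `2n - length`. -/
lemma interiorB {n : ℕ} {x : List ℕ} (hx : IsHeightSeqB n x) {k : ℕ}
    (hk : k + 2 ≤ x.length) : x.getD k 0 ≤ 2 * n - x.length := by
  have h1 := monoB hx (show k ≤ x.length - 2 by omega) (by omega)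
  have h2 := hx.2.2.2.2.1 (by omega)
  omega

/-- The function giving entries of candidate join-irreducibles. -/
def pBfun (i j : ℕ) : ℕ → ℕ := fun k => if k + 1 < i then k + 1 else max j (k + 1)

/-- The length of the candidate join-irreducible indexed by `(i, j)`. -/
def pBlen (n i j : ℕ) : ℕ := max i (min n (2 * n - j))

/-- The candidate join-irreducible elements of `D_n^B`. -/
def pB (n i j : ℕ) : List ℕ := List.ofFn (fun t : Fin (pBlen n i j) => pBfun i j (t : ℕ))

/-- Constraints for part B. -/
def CB (n : ℕ) (q : ℕ × ℕ) : Prop := 1 ≤ q.1 ∧ q.1 < q.2 ∧ q.2 ≤ 2 * n + 1 - q.1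

lemma pB_length (n i j : ℕ) : (pB n i j).length = pBlen n i j := by simp [pB]

lemma pB_getD (n i j : ℕ) {k : ℕ} (hk : k < pBlen n i j) :
    (pB n i j).getD k 0 = pBfun i j k := getD_ofFn' _ hk

lemma pBlen_facts {n i j : ℕ} (h1 : 1 ≤ i) (h2 : i < j) (h3 : j ≤ 2 * n + 1 - i) :
    i ≤ pBlen n i j ∧ pBlen n i j ≤ n := by
  unfold pBlen
  omega

lemma pB_mem {n i j : ℕ} (h1 : 1 ≤ i) (h2 : i < j) (h3 : j ≤ 2 * n + 1 - i) :
    IsHeightSeqB n (pB n i j) := by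
  obtain ⟨hiL, hLn⟩ := pBlen_facts h1 h2 h3
  have hlen := pB_length n i j
  refine ⟨by omega, by omega, ?_, ?_, ?_, ?_⟩
  · intro k hk
    rw [hlen] at hk
    rw [pB_getD n i j hk]
    unfold pBfun
    split_ifs <;> omega
  · intro k hk
    rw [hlen] at hk
    rw [pB_getD n i j (by omega), pB_getD n i j (by omega)]
    unfold pBfun
    split_ifs <;> omega
  · intro hk
    rw [hlen] at hk ⊢
    rw [pB_getD n i j (by omega)]
    unfold pBfun pBlen at *
    split_ifs <;> omega
  · rw [hlen]
    rw [pB_getD n i j (by omega)]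
    unfold pBfun pBlen at *
    split_ifs <;> omega

lemma pB_le_iff {n i j i' j' : ℕ} (h1 : 1 ≤ i) (h2 : i < j) (h3 : j ≤ 2 * n + 1 - i)
    (h1' : 1 ≤ i') (h2' : i' < j') (h3' : j' ≤ 2 * n + 1 - i') :
    DomLeB (pB n i j) (pB n i' j') ↔ i' ≤ i ∧ j ≤ j' := by
  obtain ⟨hiL, hLn⟩ := pBlen_facts h1 h2 h3
  obtain ⟨hiL', hLn'⟩ := pBlen_facts h1' h2' h3'
  constructor
  · rintro ⟨hlen, hent⟩
    rw [pB_length, pB_length] at hlen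
    have hii : i' ≤ i := by
      by_contra hco
      have hpos : i - 1 < pBlen n i' j' := by omega
      have := hent (i - 1) (by rw [pB_length]; omega)
      rw [pB_getD n i j (by omega), pB_getD n i' j' hpos] at this
      unfold pBfun at this
      split_ifs at this <;> omega
    refine ⟨hii, ?_⟩
    by_cases hc : i ≤ pBlen n i' j'
    · have := hent (i - 1) (by rw [pB_length]; omega)
      rw [pB_getD n i j (by omega), pB_getD n i' j' (by omega)] at this
      unfold pBfun at this
      split_ifs at this <;> omega
    · unfold pBlen at hc
      omega
  · rintro ⟨hii, hjj⟩
    constructor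
    · rw [pB_length, pB_length]
      unfold pBlen
      omega
    · intro k hk
      rw [pB_length] at hk
      have hk2 : k < pBlen n i j := by unfold pBlen at *; omega
      rw [pB_getD n i j hk2, pB_getD n i' j' hk]
      unfold pBfun
      split_ifs <;> omega

/-- The bottom element of `D_n^B`. -/
def botB (n : ℕ) : List ℕ := List.ofFn (fun t : Fin n => (t : ℕ) + 1)

lemma botB_length (n : ℕ) : (botB n).length = n := by simp [botB]

lemma botB_getD (n : ℕ) {k : ℕ} (hk : k < n) : (botB n).getD k 0 = k + 1 :=
  getD_ofFn' (fun k => k + 1) hk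

lemma botB_mem {n : ℕ} (hn : 0 < n) : IsHeightSeqB n (botB n) := by
  have hlen := botB_length n
  refine ⟨by omega, by omega, ?_, ?_, ?_, ?_⟩
  · intro k hk
    rw [hlen] at hk
    rw [botB_getD n hk]
  · intro k hk
    rw [hlen] at hk
    rw [botB_getD n (by omega), botB_getD n (by omega)]
    omega
  · intro hk
    rw [hlen] at hk ⊢
    rw [botB_getD n (by omega)]
    omega
  · rw [hlen]
    rw [botB_getD n (by omega)]
    omega

/-- Helper for the last entry of the truncated pointwise max. -/
lemma last_maxB {n : ℕ} {x y : List ℕ} (hx : IsHeightSeqB n x) (hy : IsHeightSeqB n y)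
    (hxy : x.length ≤ y.length) :
    max (x.getD (x.length - 1) 0) (y.getD (x.length - 1) 0) = 2 * n - x.length ∨
    max (x.getD (x.length - 1) 0) (y.getD (x.length - 1) 0) = 2 * n - x.length + 1 := by
  have hx1 : 1 ≤ x.length := hx.1
  have hxl := hx.2.2.2.2.2
  by_cases hc : y.length = x.length
  · have hyl := hy.2.2.2.2.2
    rw [hc] at hyl
    omega
  · have hint := interiorB hy (k := x.length - 1) (by have := hy.2.1; omega)
    have hyn := hy.2.1
    omega

/-- If `p` is the join of `x` and `y` in `D_n^B`, then `p` is the pointwise max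
truncated at the shorter length. -/
lemma joinB_eq {n : ℕ} {x y p : List ℕ} (hx : IsHeightSeqB n x) (hy : IsHeightSeqB n y)
    (h : IsJoinB n x y p) :
    p.length = min x.length y.length ∧
      ∀ k < p.length, p.getD k 0 = max (x.getD k 0) (y.getD k 0) := by
  obtain ⟨x, rfl⟩ : ∃ x' : List ℕ, x' = x := ⟨_, rfl⟩
  obtain ⟨z, hzdef⟩ : ∃ z : List ℕ,
      z = List.ofFn (fun t : Fin (min x.length y.length) =>
        (fun k => max (x.getD k 0) (y.getD k 0)) (t : ℕ)) := ⟨_, rfl⟩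
  have hzlen : z.length = min x.length y.length := by rw [hzdef]; simp
  have hzget : ∀ k < min x.length y.length,
      z.getD k 0 = max (x.getD k 0) (y.getD k 0) := by
    intro k hk
    rw [hzdef]
    exact getD_ofFn' (fun k => max (x.getD k 0) (y.getD k 0)) hk
  have hx1 : 1 ≤ x.length := hx.1
  have hy1 : 1 ≤ y.length := hy.1
  have hxn : x.length ≤ n := hx.2.1
  have hyn : y.length ≤ n := hy.2.1
  have hzmem : IsHeightSeqB n z := by
    refine ⟨by omega, by omega, ?_, ?_, ?_, ?_⟩
    · intro k hk
      rw [hzlen] at hk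
      rw [hzget k hk]
      have := hx.2.2.1 k (by omega)
      omega
    · intro k hk
      rw [hzlen] at hk
      rw [hzget k (by omega), hzget (k + 1) (by omega)]
      have h1 := hx.2.2.2.1 k (by omega)
      have h2 := hy.2.2.2.1 k (by omega)
      omega
    · intro hk
      rw [hzlen] at hk ⊢
      rw [hzget _ (by omega)]
      have h1 : x.getD (min x.length y.length - 2) 0 ≤ 2 * n - x.length := by
        rcases eq_or_lt_of_le (Nat.min_le_left x.length y.length) with hq | hq
        · have := hx.2.2.2.2.1 (by omega)
          rw [show x.length - 2 = min x.length y.length - 2 by omega] at this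
          omega
        · have := interiorB hx (k := min x.length y.length - 2) (by omega)
          omega
      have h2 : y.getD (min x.length y.length - 2) 0 ≤ 2 * n - y.length := by
        rcases eq_or_lt_of_le (Nat.min_le_right x.length y.length) with hq | hq
        · have := hy.2.2.2.2.1 (by omega)
          rw [show y.length - 2 = min x.length y.length - 2 by omega] at this
          omega
        · have := interiorB hy (k := min x.length y.length - 2) (by omega)
          omega
      omega
    · rw [hzlen]
      rw [hzget _ (by omega)]
      rcases le_total x.length y.length with hc | hc
      · have := last_maxB hx hy hc
        rw [show min x.length y.length - 1 = x.length - 1 by omega]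
        omega
      · have := last_maxB hy hx hc
        rw [show min x.length y.length - 1 = y.length - 1 by omega]
        omega
  -- z is an upper bound of x and y
  have hxz : DomLeB x z := by
    refine ⟨by omega, ?_⟩
    intro k hk
    rw [hzlen] at hk
    rw [hzget k hk]
    omega
  have hyz : DomLeB y z := by
    refine ⟨by omega, ?_⟩
    intro k hk
    rw [hzlen] at hk
    rw [hzget k hk]
    omega
  have hpz : DomLeB p z := h.2.2 z hzmem hxz hyz
  have hpx := h.1
  have hpy := h.2.1
  have hplen : p.length = min x.length y.length := by
    have h1 := hpz.1
    have h2 := hpx.1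
    have h3 := hpy.1
    omega
  refine ⟨hplen, ?_⟩
  intro k hk
  have h1 := hpz.2 k (by omega)
  have h2 := hpx.2 k (by omega)
  have h3 := hpy.2 k (by omega)
  rw [hzget k (by omega)] at h1
  omega

/-- Key rigidity: an element of `D_n^B` below `pB n i j` whose `(i-1)`-st entry is `j`
equals `pB n i j`. -/
lemma pB_eq_of {n i j : ℕ} (h1 : 1 ≤ i) (h2 : i < j) (h3 : j ≤ 2 * n + 1 - i)
    {x : List ℕ} (hx : IsHeightSeqB n x) (hxp : DomLeB x (pB n i j))
    (hval : x.getD (i - 1) 0 = j) : x = pB n i j := by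
  obtain ⟨hiL, hLn⟩ := pBlen_facts h1 h2 h3
  have hxn : x.length ≤ n := hx.2.1
  have hlenle : pBlen n i j ≤ x.length := by
    have := hxp.1
    rwa [pB_length] at this
  -- x has length exactly pBlen n i j
  have hxlen : x.length = pBlen n i j := by
    by_contra hne
    have hgt : pBlen n i j < x.length := by omega
    have hint := interiorB hx (k := i - 1) (by omega)
    rw [hval] at hint
    unfold pBlen at *
    omega
  apply listext (by rw [pB_length]; omega)
  intro k hk
  rw [hxlen] at hk
  rw [pB_getD n i j hk]
  have hub := hxp.2 k (by rw [pB_length]; omega)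
  rw [pB_getD n i j hk] at hub
  have hlb := hx.2.2.1 k (by omega)
  unfold pBfun at hub ⊢
  by_cases hc1 : k + 1 < i
  · rw [if_pos hc1] at hub ⊢
    omega
  · rw [if_neg hc1] at hub ⊢
    by_cases hc2 : k + 2 ≤ pBlen n i j
    · -- interior: monotonicity from position i-1
      have hmono := monoB hx (show i - 1 ≤ k by omega) (by omega)
      rw [hval] at hmono
      omega
    · -- last entry
      have hkL : k = pBlen n i j - 1 := by omega
      subst hkL
      have hlast := hx.2.2.2.2.2
      rw [hxlen] at hlast
      -- the last entry of pB is admissible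
      have hpbl := (pB_mem h1 h2 h3).2.2.2.2.2
      rw [pB_length] at hpbl
      rw [pB_getD n i j (by omega)] at hpbl
      unfold pBfun at hpbl
      rw [if_neg (by omega)] at hpbl
      rcases hpbl with hp0 | hp1
      · omega
      · -- in this case j = 2n+1-i and pBlen = i, so the position is i-1
        have hji : max j (pBlen n i j - 1 + 1) = j := by
          unfold pBlen at *
          omega
        have hLi : pBlen n i j = i := by
          unfold pBlen at *
          omega
        rw [show pBlen n i j - 1 = i - 1 by omega] at hlast ⊢
        rw [hval]
        omega

lemma pB_joinIrred {n i j : ℕ} (hn : 0 < n) (h1 : 1 ≤ i) (h2 : i < j)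
    (h3 : j ≤ 2 * n + 1 - i) : JoinIrredB n (pB n i j) := by
  obtain ⟨hiL, hLn⟩ := pBlen_facts h1 h2 h3
  refine ⟨pB_mem h1 h2 h3, ?_, ?_⟩
  · intro hall
    obtain ⟨hl, he⟩ := hall (botB n) (botB_mem hn)
    rw [botB_length] at he
    have := he (i - 1) (by omega)
    rw [botB_getD n (by omega), pB_getD n i j (by omega)] at this
    unfold pBfun at this
    split_ifs at this <;> omega
  · intro x y hx hy hjoin
    obtain ⟨hplen, hpent⟩ := joinB_eq hx hy hjoin
    rw [pB_length] at hplen hpent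
    have hpos : i - 1 < pBlen n i j := by omega
    have hvm := hpent (i - 1) hpos
    rw [pB_getD n i j hpos] at hvm
    unfold pBfun at hvm
    rw [if_neg (by omega)] at hvm
    have hjv : max (x.getD (i - 1) 0) (y.getD (i - 1) 0) = j := by omega
    rcases max_choice (x.getD (i - 1) 0) (y.getD (i - 1) 0) with hc | hc
    · left
      exact (pB_eq_of h1 h2 h3 hx hjoin.1 (by omega)).symm
    · right
      exact (pB_eq_of h1 h2 h3 hy hjoin.2.1 (by omega)).symm

/-- Interior rigidity step for join-irreducibles of type B. -/
lemma stepInterior {n : ℕ} {p : List ℕ} (hmem : IsHeightSeqB n p)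
    (hji : ∀ x y : List ℕ, IsHeightSeqB n x → IsHeightSeqB n y →
      IsJoinB n x y p → p = x ∨ p = y)
    {m K : ℕ} (hmK : m < K) (hK : K + 2 ≤ p.length) (hm : m + 1 < p.getD m 0) :
    p.getD K 0 ≤ max (p.getD (K - 1) 0) (K + 1) := by
  have hL1 : 1 ≤ p.length := hmem.1
  have hLn : p.length ≤ n := hmem.2.1
  have hlb := hmem.2.2.1
  have hmono := hmem.2.2.2.1
  have hpen := hmem.2.2.2.2.1 (by omega)
  have hlast := hmem.2.2.2.2.2
  by_contra hne
  have hgt : max (p.getD (K - 1) 0) (K + 1) < p.getD K 0 := by omega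
  obtain ⟨x, hxdef⟩ : ∃ x : List ℕ, x = List.ofFn (fun t : Fin p.length =>
    (fun s => if s < K then s + 1 else p.getD s 0) (t : ℕ)) := ⟨_, rfl⟩
  obtain ⟨y, hydef⟩ : ∃ y : List ℕ, y = List.ofFn (fun t : Fin p.length =>
    (fun s => if s < K then p.getD s 0 else
      if s = p.length - 1 then 2 * n - p.length else
        max (p.getD (K - 1) 0) (s + 1)) (t : ℕ)) := ⟨_, rfl⟩
  have hxlen : x.length = p.length := by rw [hxdef]; simp
  have hylen : y.length = p.length := by rw [hydef]; simp
  have hxget : ∀ t < p.length, x.getD t 0 = if t < K then t + 1 else p.getD t 0 := by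
    intro t ht
    rw [hxdef]
    exact getD_ofFn' (fun s => if s < K then s + 1 else p.getD s 0) ht
  have hyget : ∀ t < p.length, y.getD t 0 = if t < K then p.getD t 0 else
      if t = p.length - 1 then 2 * n - p.length else max (p.getD (K - 1) 0) (t + 1) := by
    intro t ht
    rw [hydef]
    exact getD_ofFn' (fun s => if s < K then p.getD s 0 else
      if s = p.length - 1 then 2 * n - p.length else max (p.getD (K - 1) 0) (s + 1)) ht
  have hmKe : p.getD (K - 1) 0 ≤ 2 * n - p.length := by
    have := monoB hmem (show K - 1 ≤ p.length - 2 by omega) (by omega)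
    omega
  have hxmem : IsHeightSeqB n x := by
    refine ⟨by omega, by omega, ?_, ?_, ?_, ?_⟩
    · intro t ht
      rw [hxlen] at ht
      rw [hxget t ht]
      have := hlb t ht
      split_ifs <;> omega
    · intro t ht
      rw [hxlen] at ht
      rw [hxget t (by omega), hxget (t + 1) (by omega)]
      have h1 := hmono t (by omega)
      have h2 := hlb (t + 1) (by omega)
      split_ifs <;> omega
    · intro h2
      rw [hxlen] at h2 ⊢
      rw [hxget (p.length - 2) (by omega)]
      split_ifs <;> omega
    · rw [hxlen]
      rw [hxget (p.length - 1) (by omega)]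
      split_ifs <;> omega
  have hymem : IsHeightSeqB n y := by
    refine ⟨by omega, by omega, ?_, ?_, ?_, ?_⟩
    · intro t ht
      rw [hylen] at ht
      rw [hyget t ht]
      have := hlb t ht
      split_ifs <;> omega
    · intro t ht
      rw [hylen] at ht
      rw [hyget t (by omega), hyget (t + 1) (by omega)]
      have h1 := hmono t (by omega)
      by_cases hc2 : t < K
      · rw [if_pos hc2]
        by_cases hc1 : t + 1 < K
        · rw [if_pos hc1]; exact h1
        · have h2 := monoB hmem (show t ≤ K - 1 by omega) (by omega)
          rw [if_neg hc1, if_neg (by omega)]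
          omega
      · rw [if_neg hc2, if_neg (by omega), if_neg (by omega), if_neg (by omega)]
        omega
    · intro h2
      rw [hylen] at h2 ⊢
      rw [hyget (p.length - 2) (by omega)]
      split_ifs <;> omega
    · rw [hylen]
      rw [hyget (p.length - 1) (by omega)]
      split_ifs <;> omega
  have hxp : DomLeB x p := by
    refine ⟨by omega, ?_⟩
    intro t ht
    rw [hxget t ht]
    have := hlb t ht
    split_ifs <;> omega
  have hyp : DomLeB y p := by
    refine ⟨by omega, ?_⟩
    intro t ht
    rw [hyget t ht]
    have h1 := hlb t ht
    have h2 : t = p.length - 1 → 2 * n - p.length ≤ p.getD t 0 := by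
      intro h; rw [h]; omega
    have h3 : K ≤ t → t + 2 ≤ p.length → p.getD (K - 1) 0 ≤ p.getD t 0 := by
      intro h4 h5
      exact monoB hmem (by omega) h5
    split_ifs with hc1 hc2
    · omega
    · exact h2 hc2
    · have := h3 (by omega) (by omega)
      omega
  have hsup : IsJoinB n x y p := by
    refine ⟨hxp, hyp, ?_⟩
    intro z hz hxz hyz
    refine ⟨by have := hxz.1; omega, ?_⟩
    intro t ht
    have htL : t < p.length := by have := hxz.1; omega
    by_cases hc : t < K
    · have := hyz.2 t ht
      rw [hyget t htL, if_pos hc] at this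
      exact this
    · have := hxz.2 t ht
      rw [hxget t htL, if_neg hc] at this
      exact this
  rcases hji x y hxmem hymem hsup with hc | hc
  · have := congrArg (fun l => l.getD m 0) hc
    rw [hxget m (by omega), if_pos (by omega)] at this
    omega
  · have := congrArg (fun l => l.getD K 0) hc
    rw [hyget K (by omega), if_neg (by omega), if_neg (by omega)] at this
    omega

/-- If some entry before the last is raised, the last entry cannot be `2n - L + 1`. -/
lemma stepLast1 {n : ℕ} {p : List ℕ} (hmem : IsHeightSeqB n p)
    (hji : ∀ x y : List ℕ, IsHeightSeqB n x → IsHeightSeqB n y →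
      IsJoinB n x y p → p = x ∨ p = y)
    {m : ℕ} (hmL : m + 1 < p.length) (hm : m + 1 < p.getD m 0)
    (hl1 : p.getD (p.length - 1) 0 = 2 * n - p.length + 1) : False := by
  have hL1 : 1 ≤ p.length := hmem.1
  have hLn : p.length ≤ n := hmem.2.1
  have hlb := hmem.2.2.1
  have hmono := hmem.2.2.2.1
  have hpen := hmem.2.2.2.2.1 (by omega)
  obtain ⟨x, hxdef⟩ : ∃ x : List ℕ, x = List.ofFn (fun t : Fin p.length =>
    (fun s => if s < p.length - 1 then s + 1 else 2 * n - p.length + 1) (t : ℕ)) := ⟨_, rfl⟩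
  obtain ⟨y, hydef⟩ : ∃ y : List ℕ, y = List.ofFn (fun t : Fin p.length =>
    (fun s => if s < p.length - 1 then p.getD s 0 else 2 * n - p.length) (t : ℕ)) := ⟨_, rfl⟩
  have hxlen : x.length = p.length := by rw [hxdef]; simp
  have hylen : y.length = p.length := by rw [hydef]; simp
  have hxget : ∀ t < p.length,
      x.getD t 0 = if t < p.length - 1 then t + 1 else 2 * n - p.length + 1 := by
    intro t ht
    rw [hxdef]
    exact getD_ofFn' (fun s => if s < p.length - 1 then s + 1 else 2 * n - p.length + 1) ht
  have hyget : ∀ t < p.length,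
      y.getD t 0 = if t < p.length - 1 then p.getD t 0 else 2 * n - p.length := by
    intro t ht
    rw [hydef]
    exact getD_ofFn' (fun s => if s < p.length - 1 then p.getD s 0 else 2 * n - p.length) ht
  have hxmem : IsHeightSeqB n x := by
    refine ⟨by omega, by omega, ?_, ?_, ?_, ?_⟩
    · intro t ht
      rw [hxlen] at ht
      rw [hxget t ht]
      split_ifs <;> omega
    · intro t ht
      rw [hxlen] at ht
      rw [hxget t (by omega), hxget (t + 1) (by omega)]
      split_ifs <;> omega
    · intro h2
      rw [hxlen] at h2 ⊢
      rw [hxget (p.length - 2) (by omega)]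
      split_ifs <;> omega
    · rw [hxlen]
      rw [hxget (p.length - 1) (by omega)]
      split_ifs <;> omega
  have hymem : IsHeightSeqB n y := by
    refine ⟨by omega, by omega, ?_, ?_, ?_, ?_⟩
    · intro t ht
      rw [hylen] at ht
      rw [hyget t ht]
      have := hlb t ht
      split_ifs <;> omega
    · intro t ht
      rw [hylen] at ht
      rw [hyget t (by omega), hyget (t + 1) (by omega)]
      have h1 := hmono t (by omega)
      split_ifs <;> omega
    · intro h2
      rw [hylen] at h2 ⊢
      rw [hyget (p.length - 2) (by omega)]
      split_ifs <;> omega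
    · rw [hylen]
      rw [hyget (p.length - 1) (by omega)]
      split_ifs <;> omega
  have hxp : DomLeB x p := by
    refine ⟨by omega, ?_⟩
    intro t ht
    rw [hxget t ht]
    have := hlb t ht
    split_ifs with hc
    · omega
    · have htl : t = p.length - 1 := by omega
      rw [htl, hl1]
  have hyp : DomLeB y p := by
    refine ⟨by omega, ?_⟩
    intro t ht
    rw [hyget t ht]
    have h1 := hlb t ht
    split_ifs with hc
    · omega
    · have htl : t = p.length - 1 := by omega
      rw [htl, hl1]
      omega
  have hsup : IsJoinB n x y p := by
    refine ⟨hxp, hyp, ?_⟩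
    intro z hz hxz hyz
    refine ⟨by have := hxz.1; omega, ?_⟩
    intro t ht
    have htL : t < p.length := by have := hxz.1; omega
    by_cases hc : t < p.length - 1
    · have := hyz.2 t ht
      rw [hyget t htL, if_pos hc] at this
      exact this
    · have := hxz.2 t ht
      rw [hxget t htL, if_neg hc] at this
      have h7 : p.getD t 0 = 2 * n - p.length + 1 := by
        rw [show t = p.length - 1 by omega, hl1]
      rw [h7]
      exact this
  rcases hji x y hxmem hymem hsup with hc | hc
  · have := congrArg (fun l => l.getD m 0) hc
    rw [hxget m (by omega), if_pos (by omega)] at this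
    omega
  · have := congrArg (fun l => l.getD (p.length - 1) 0) hc
    rw [hyget (p.length - 1) (by omega), if_neg (by omega)] at this
    omega

/-- If the last entry is `2n - L` with `L < n` and some earlier entry is raised, then the
penultimate entry must reach `2n - L`. -/
lemma stepLast2 {n : ℕ} {p : List ℕ} (hmem : IsHeightSeqB n p)
    (hji : ∀ x y : List ℕ, IsHeightSeqB n x → IsHeightSeqB n y →
      IsJoinB n x y p → p = x ∨ p = y)
    (hLn' : p.length < n)
    (hl0 : p.getD (p.length - 1) 0 = 2 * n - p.length)
    {m : ℕ} (hm : m + 1 < p.getD m 0) (hmL : m < p.length - 1)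
    (hlt : p.getD (p.length - 2) 0 < 2 * n - p.length) : False := by
  have hL1 : 1 ≤ p.length := hmem.1
  have hLn : p.length ≤ n := hmem.2.1
  have hlb := hmem.2.2.1
  have hmono := hmem.2.2.2.1
  have hpen := hmem.2.2.2.2.1 (by omega)
  obtain ⟨x, hxdef⟩ : ∃ x : List ℕ, x = List.ofFn (fun t : Fin p.length =>
    (fun s => if s < p.length - 1 then s + 1 else 2 * n - p.length) (t : ℕ)) := ⟨_, rfl⟩
  obtain ⟨y, hydef⟩ : ∃ y : List ℕ, y = List.ofFn (fun t : Fin (p.length + 1) =>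
    (fun s => if s < p.length - 1 then p.getD s 0 else 2 * n - p.length - 1) (t : ℕ)) :=
    ⟨_, rfl⟩
  have hxlen : x.length = p.length := by rw [hxdef]; simp
  have hylen : y.length = p.length + 1 := by rw [hydef]; simp
  have hxget : ∀ t < p.length,
      x.getD t 0 = if t < p.length - 1 then t + 1 else 2 * n - p.length := by
    intro t ht
    rw [hxdef]
    exact getD_ofFn' (fun s => if s < p.length - 1 then s + 1 else 2 * n - p.length) ht
  have hyget : ∀ t < p.length + 1,
      y.getD t 0 = if t < p.length - 1 then p.getD t 0 else 2 * n - p.length - 1 := by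
    intro t ht
    rw [hydef]
    exact getD_ofFn' (fun s => if s < p.length - 1 then p.getD s 0 else 2 * n - p.length - 1) ht
  have hxmem : IsHeightSeqB n x := by
    refine ⟨by omega, by omega, ?_, ?_, ?_, ?_⟩
    · intro t ht
      rw [hxlen] at ht
      rw [hxget t ht]
      split_ifs <;> omega
    · intro t ht
      rw [hxlen] at ht
      rw [hxget t (by omega), hxget (t + 1) (by omega)]
      split_ifs <;> omega
    · intro h2
      rw [hxlen] at h2 ⊢
      rw [hxget (p.length - 2) (by omega)]
      split_ifs <;> omega
    · rw [hxlen]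
      rw [hxget (p.length - 1) (by omega)]
      split_ifs <;> omega
  have hymem : IsHeightSeqB n y := by
    refine ⟨by omega, by omega, ?_, ?_, ?_, ?_⟩
    · intro t ht
      rw [hylen] at ht
      rw [hyget t ht]
      have h2 : t < p.length → t + 1 ≤ p.getD t 0 := fun h => hlb t h
      split_ifs with hc
      · exact h2 (by omega)
      · omega
    · intro t ht
      rw [hylen] at ht
      rw [hyget t (by omega), hyget (t + 1) (by omega)]
      have h1 : t + 2 < p.length → p.getD t 0 ≤ p.getD (t + 1) 0 := fun h => hmono t h
      by_cases hc1 : t + 1 < p.length - 1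
      · rw [if_pos (by omega), if_pos hc1]
        exact h1 (by omega)
      · rw [if_neg hc1]
        split_ifs with hc2
        · -- t = p.length - 2
          have h3 : t = p.length - 2 := by omega
          rw [h3]
          omega
        · omega
    · intro h2
      rw [hylen] at h2 ⊢
      rw [hyget (p.length + 1 - 2) (by omega), if_neg (by omega)]
      omega
    · rw [hylen]
      rw [hyget (p.length + 1 - 1) (by omega), if_neg (by omega)]
      left
      omega
  have hxp : DomLeB x p := by
    refine ⟨by omega, ?_⟩
    intro t ht
    rw [hxget t ht]
    have := hlb t ht
    split_ifs with hc
    · omega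
    · rw [show t = p.length - 1 by omega, hl0]
  have hyp : DomLeB y p := by
    refine ⟨by omega, ?_⟩
    intro t ht
    rw [hyget t (by omega)]
    split_ifs with hc
    · exact le_refl _
    · rw [show t = p.length - 1 by omega, hl0]
      omega
  have hsup : IsJoinB n x y p := by
    refine ⟨hxp, hyp, ?_⟩
    intro z hz hxz hyz
    refine ⟨by have := hxz.1; omega, ?_⟩
    intro t ht
    have htL : t < p.length := by have := hxz.1; omega
    by_cases hc : t < p.length - 1
    · have := hyz.2 t (by have := hxz.1; omega)
      rw [hyget t (by omega), if_pos hc] at this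
      exact this
    · have := hxz.2 t ht
      rw [hxget t htL, if_neg hc] at this
      have h7 : p.getD t 0 = 2 * n - p.length := by
        rw [show t = p.length - 1 by omega, hl0]
      rw [h7]
      exact this
  rcases hji x y hxmem hymem hsup with hc | hc
  · have := congrArg (fun l => l.getD m 0) hc
    rw [hxget m (by omega), if_pos (by omega)] at this
    omega
  · have := congrArg List.length hc
    omega

/-- Classification of join-irreducibles of `D_n^B`. -/
lemma classB {n : ℕ} (hn : 0 < n) {p : List ℕ} (hp : JoinIrredB n p) :
    ∃ q : ℕ × ℕ, CB n q ∧ p = pB n q.1 q.2 := by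
  obtain ⟨hmem, hnb, hji⟩ := hp
  have hL1 : 1 ≤ p.length := hmem.1
  have hLn : p.length ≤ n := hmem.2.1
  have hlb := hmem.2.2.1
  have hlast := hmem.2.2.2.2.2
  classical
  -- an entry exceeds the minimum
  have hex : ∃ k, k < p.length ∧ k + 1 < p.getD k 0 := by
    by_contra hco
    push_neg at hco
    apply hnb
    intro q hq
    have hpn : p.length = n := by
      by_contra hne
      have := hco (p.length - 1) (by omega)
      omega
    refine ⟨by rw [hpn]; exact hq.2.1, ?_⟩
    intro k hk
    have h1 := hco k (by have := hq.2.1; omega)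
    have h2 := hq.2.2.1 k hk
    omega
  obtain ⟨m, ⟨hmL, hmv⟩, hminim'⟩ : ∃ m, (m < p.length ∧ m + 1 < p.getD m 0) ∧
      ∀ t < m, ¬(t < p.length ∧ t + 1 < p.getD t 0) :=
    ⟨Nat.find hex, Nat.find_spec hex, fun t ht => Nat.find_min hex ht⟩
  have hminim : ∀ t < m, p.getD t 0 = t + 1 := by
    intro t ht
    have h1 := hminim' t ht
    have h2 := hlb t (by omega)
    omega
  -- interior propagation
  have hprop : ∀ k, m ≤ k → k + 2 ≤ p.length → p.getD k 0 = max (p.getD m 0) (k + 1) := by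
    intro k hmk
    induction k, hmk using Nat.le_induction with
    | base =>
      intro h
      omega
    | succ k hmk ih =>
      intro hk2
      have ihv := ih (by omega)
      have hstep := stepInterior hmem hji (show m < k + 1 by omega) (by omega) hmv
      rw [show k + 1 - 1 = k by omega] at hstep
      have hge := monoB hmem (show k ≤ k + 1 by omega) (by omega)
      have hlbk := hlb (k + 1) (by omega)
      omega
  by_cases hm2 : m = p.length - 1
  · -- only the last entry is raised
    have hmv' : p.length - 1 + 1 < p.getD (p.length - 1) 0 := by rw [← hm2]; exact hmv
    refine ⟨(p.length, p.getD (p.length - 1) 0), ⟨by omega, by omega, by omega⟩, ?_⟩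
    show p = pB n p.length (p.getD (p.length - 1) 0)
    have hpl : pBlen n p.length (p.getD (p.length - 1) 0) = p.length := by
      unfold pBlen
      omega
    apply listext (by rw [pB_length, hpl])
    intro k hk
    rw [pB_getD n _ _ (by omega)]
    unfold pBfun
    split_ifs with hc
    · exact hminim k (by omega)
    · have hk' : k = p.length - 1 := by omega
      subst hk'
      omega
  · -- some entry before the last is raised
    have hmL2 : m < p.length - 1 := by omega
    have hl0 : p.getD (p.length - 1) 0 = 2 * n - p.length := by
      rcases hlast with h | h
      · exact h
      · exact absurd h (fun h' => stepLast1 hmem hji (by omega) hmv h')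
    have hpen := hmem.2.2.2.2.1 (by omega)
    have hjn : p.getD m 0 ≤ 2 * n - p.length := by
      have := monoB hmem (show m ≤ p.length - 2 by omega) (by omega)
      omega
    by_cases hLn' : p.length = n
    · refine ⟨(m + 1, p.getD m 0), ⟨by omega, by omega, by omega⟩, ?_⟩
      show p = pB n (m + 1) (p.getD m 0)
      have hpl : pBlen n (m + 1) (p.getD m 0) = p.length := by
        unfold pBlen
        omega
      apply listext (by rw [pB_length, hpl])
      intro k hk
      rw [pB_getD n _ _ (by omega)]
      unfold pBfun
      split_ifs with hc
      · exact hminim k (by omega)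
      · by_cases hc2 : k + 2 ≤ p.length
        · exact hprop k (by omega) hc2
        · have hk' : k = p.length - 1 := by omega
          subst hk'
          omega
    · -- short case: length < n
      have hpen2 : p.getD (p.length - 2) 0 = 2 * n - p.length := by
        by_contra hne
        exact stepLast2 hmem hji (by omega) hl0 hmv hmL2 (by omega)
      have hjeq : p.getD m 0 = 2 * n - p.length := by
        have := hprop (p.length - 2) (by omega) (by omega)
        omega
      refine ⟨(m + 1, p.getD m 0), ⟨by omega, by omega, by omega⟩, ?_⟩
      show p = pB n (m + 1) (p.getD m 0)
      have hpl : pBlen n (m + 1) (p.getD m 0) = p.length := by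
        unfold pBlen
        omega
      apply listext (by rw [pB_length, hpl])
      intro k hk
      rw [pB_getD n _ _ (by omega)]
      unfold pBfun
      split_ifs with hc
      · exact hminim k (by omega)
      · by_cases hc2 : k + 2 ≤ p.length
        · exact hprop k (by omega) hc2
        · have hk' : k = p.length - 1 := by omega
          subst hk'
          omega

theorem partB (n : ℕ) (hn : 0 < n) :
    ∃ g : {p : List ℕ // JoinIrredB n p} →
        {q : ℕ × ℕ // 1 ≤ q.1 ∧ q.1 < q.2 ∧ q.2 ≤ 2 * n + 1 - q.1},
      Function.Bijective g ∧
        ∀ a b, DomLeB a.1 b.1 ↔ ((g b).1.1 ≤ (g a).1.1 ∧ (g a).1.2 ≤ (g b).1.2) :=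
  assemble (JoinIrredB n) DomLeB (fun q => 1 ≤ q.1 ∧ q.1 < q.2 ∧ q.2 ≤ 2 * n + 1 - q.1)
    (fun q => pB n q.1 q.2)
    (fun a ha => classB hn ha)
    (fun q hq => pB_joinIrred hn hq.1 hq.2.1 hq.2.2)
    (fun q q' hq hq' => pB_le_iff hq.1 hq.2.1 hq.2.2 hq'.1 hq'.2.1 hq'.2.2)

theorem joinIrred_posets_iso (n : ℕ) (hn : 0 < n) :
    (∃ f : {p : Fin n → ℕ // JoinIrredA n p} →
        {q : ℕ × ℕ // 1 ≤ q.1 ∧ q.1 < q.2 ∧ q.2 ≤ n},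
      Function.Bijective f ∧
        ∀ a b, a.1 ≤ b.1 ↔ ((f b).1.1 ≤ (f a).1.1 ∧ (f a).1.2 ≤ (f b).1.2)) ∧
    (∃ g : {p : List ℕ // JoinIrredB n p} →
        {q : ℕ × ℕ // 1 ≤ q.1 ∧ q.1 < q.2 ∧ q.2 ≤ 2 * n + 1 - q.1},
      Function.Bijective g ∧
        ∀ a b, DomLeB a.1 b.1 ↔ ((g b).1.1 ≤ (g a).1.1 ∧ (g a).1.2 ≤ (g b).1.2)) := by
  exact ⟨partA n hn, partB n hn⟩
end
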